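/- Let H be a complex Hilbert space and S a set. Suppose L and L' are complex Hilbert spaces with families of bounded linear operators V_s : H → L and V'_s : H → L' (s ∈ S) such that V_s* ∘ V_t = V'_s* ∘ V'_t for all s, t ∈ S, and suppose both factorizations are minimal: L equals the closed linear span of {V_s a : s ∈ S, a ∈ H} and L' equals the closed linear span of {V'_s a : s ∈ S, a ∈ H}. Then there exists a unitary (linear isometric isomorphism) U : L → L' such that U(V_s a) = V'_s a for all s ∈ S and a ∈ H. -/

import Mathlib

open scoped ComplexInnerProductSpace in
/-- Two minimal factorizations of the same operator-valued kernel are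
unitarily equivalent: there is a unitary `U : L ≃ L'` with `U (V_s a) = V'_s a`. -/
theorem stmt_7 {H L L' : Type*} [NormedAddCommGroup H] [InnerProductSpace ℂ H] [CompleteSpace H]
    [NormedAddCommGroup L] [InnerProductSpace ℂ L] [CompleteSpace L]
    [NormedAddCommGroup L'] [InnerProductSpace ℂ L'] [CompleteSpace L']
    {S : Type*} (V : S → H →L[ℂ] L) (V' : S → H →L[ℂ] L')
    (hVV' : ∀ s t, (ContinuousLinearMap.adjoint (V s)).comp (V t)
        = (ContinuousLinearMap.adjoint (V' s)).comp (V' t))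
    (hmin : (Submodule.span ℂ (Set.range fun p : S × H => V p.1 p.2)).topologicalClosure = ⊤)
    (hmin' : (Submodule.span ℂ (Set.range fun p : S × H => V' p.1 p.2)).topologicalClosure = ⊤) :
    ∃ U : L ≃ₗᵢ[ℂ] L', ∀ (s : S) (a : H), U (V s a) = V' s a := by
  classical
  -- pointwise inner products agree
  have hinner : ∀ (s t : S) (a b : H), ⟪V s a, V t b⟫ = ⟪V' s a, V' t b⟫ := by
    intro s t a b
    have h := congrArg (fun T : H →L[ℂ] H => ⟪a, T b⟫) (hVV' s t)
    simpa [ContinuousLinearMap.adjoint_inner_right] using h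
  set F : ((S × H) →₀ ℂ) →ₗ[ℂ] L :=
    Finsupp.linearCombination ℂ (fun p : S × H => V p.1 p.2) with hF
  set F' : ((S × H) →₀ ℂ) →ₗ[ℂ] L' :=
    Finsupp.linearCombination ℂ (fun p : S × H => V' p.1 p.2) with hF'
  have hFF' : ∀ f g : (S × H) →₀ ℂ, ⟪F f, F g⟫ = ⟪F' f, F' g⟫ := by
    intro f g
    simp only [hF, hF', Finsupp.linearCombination_apply, Finsupp.sum, sum_inner, inner_sum,
      inner_smul_left, inner_smul_right]
    refine Finset.sum_congr rfl fun p _ => ?_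
    congr 1
    exact Finset.sum_congr rfl fun q _ => by rw [hinner]
  have hnorm : ∀ f : (S × H) →₀ ℂ, ‖F f‖ = ‖F' f‖ := by
    intro f
    have h := hFF' f f
    rw [inner_self_eq_norm_sq_to_K, inner_self_eq_norm_sq_to_K] at h
    have h2 : ‖F f‖ ^ 2 = ‖F' f‖ ^ 2 := by exact_mod_cast h
    nlinarith [norm_nonneg (F f), norm_nonneg (F' f)]
  have hker : LinearMap.ker F ≤ LinearMap.ker F' := by
    intro f hf
    rw [LinearMap.mem_ker] at hf ⊢
    have := hnorm f
    rw [hf, norm_zero] at this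
    exact norm_eq_zero.mp this.symm
  -- the linear map on the range of F
  set G : LinearMap.range F →ₗ[ℂ] L' :=
    ((LinearMap.ker F).liftQ F' hker).comp (LinearMap.quotKerEquivRange F).symm.toLinearMap
    with hG
  have hGF : ∀ f : (S × H) →₀ ℂ, G ⟨F f, LinearMap.mem_range_self F f⟩ = F' f := by
    intro f
    have h1 : (LinearMap.quotKerEquivRange F).symm ⟨F f, LinearMap.mem_range_self F f⟩
        = Submodule.Quotient.mk f := by
      rw [LinearEquiv.symm_apply_eq]
      exact Subtype.ext (F.quotKerEquivRange_apply_mk f).symm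
    simp [hG, h1]
  have hGnorm : ∀ x : LinearMap.range F, ‖G x‖ = ‖x‖ := by
    rintro ⟨x, f, rfl⟩
    rw [hGF f]
    exact (hnorm f).symm ▸ (hnorm f).symm
  set Gi : LinearMap.range F →ₗᵢ[ℂ] L' := ⟨G, hGnorm⟩ with hGi
  set e : (LinearMap.range F : Submodule ℂ L) →L[ℂ] L := (LinearMap.range F).subtypeL with he
  have h_e : IsUniformInducing e := isUniformEmbedding_subtype_val.isUniformInducing
  have hrange : LinearMap.range F
      = Submodule.span ℂ (Set.range fun p : S × H => V p.1 p.2) := by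
    rw [hF, Finsupp.range_linearCombination]
  have h_dense : DenseRange e := by
    have : Dense ((LinearMap.range F : Submodule ℂ L) : Set L) := by
      rw [Submodule.dense_iff_topologicalClosure_eq_top, hrange, hmin]
    show Dense (Set.range e)
    convert this using 2
    ext x
    simp [he]
  set Ub : L →L[ℂ] L' := Gi.toContinuousLinearMap.extend e with hUb
  have hUbe : ∀ x : LinearMap.range F, Ub x = G x := fun x =>
    ContinuousLinearMap.extend_eq _ h_dense h_e x
  have hUbF : ∀ f : (S × H) →₀ ℂ, Ub (F f) = F' f := by
    intro f
    have := hUbe ⟨F f, LinearMap.mem_range_self F f⟩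
    rw [hGF f] at this
    exact this
  have hUbnorm : ∀ y : L, ‖Ub y‖ = ‖y‖ := by
    have hfuns : (fun y => ‖Ub y‖) = fun y : L => ‖y‖ := by
      refine h_dense.equalizer (continuous_norm.comp Ub.continuous) continuous_norm ?_
      funext x
      simp only [Function.comp_apply]
      rw [show (e x : L) = (x : L) from rfl, hUbe x, hGnorm x]
      rfl
    exact fun y => congrFun hfuns y
  set Ui : L →ₗᵢ[ℂ] L' := ⟨Ub.toLinearMap, hUbnorm⟩ with hUi
  have hUiV : ∀ (s : S) (a : H), Ui (V s a) = V' s a := by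
    intro s a
    have h1 : F (Finsupp.single (s, a) 1) = V s a := by
      simp [hF]
    have h2 : F' (Finsupp.single (s, a) 1) = V' s a := by
      simp [hF']
    have : Ui (V s a) = Ub (V s a) := rfl
    rw [this, ← h1, hUbF, h2]
  have hsurj : Function.Surjective Ui := by
    have hclosed : IsClosed (Set.range Ui) :=
      (Ui.isometry.isClosedEmbedding).isClosed_range
    have hle : Submodule.span ℂ (Set.range fun p : S × H => V' p.1 p.2)
        ≤ LinearMap.range Ui.toLinearMap := by
      rw [Submodule.span_le]
      rintro _ ⟨⟨s, a⟩, rfl⟩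
      exact ⟨V s a, hUiV s a⟩
    have hcl : (LinearMap.range Ui.toLinearMap).topologicalClosure
        = LinearMap.range Ui.toLinearMap :=
      IsClosed.submodule_topologicalClosure_eq (by exact hclosed)
    have : (⊤ : Submodule ℂ L') ≤ LinearMap.range Ui.toLinearMap := by
      rw [← hmin', ← hcl]
      exact Submodule.topologicalClosure_mono hle
    refine LinearMap.range_eq_top.mp ?_
    exact top_le_iff.mp this
  refine ⟨LinearIsometryEquiv.ofSurjective Ui hsurj, fun s a => ?_⟩
  rw [LinearIsometryEquiv.coe_ofSurjective]
  exact hUiV s a
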